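/- Let $(T_r)_{r \geq 0}$ be a decreasing sequence of measurable sets with $0 < \mu(T_r) < \infty$, and let $g \in L^2$, $x$ a point, $\nu \geq 1$. Then $\int_{T_0} (g(x)-g(p))^2 d\mu(p) \leq \frac{2\mu(T_0)}{\mu(T_\nu)} \int_{T_\nu} (g(x)-g(p))^2 d\mu(p) + \sum_{r=0}^{\nu-1} 2^{r+2} \frac{\mu(T_0)}{\mu(T_r)\mu(T_{r+1})} \int_{T_r}\int_{T_{r+1}} (g(p)-g(q))^2 d\mu(p) d\mu(q)$. -/

import Mathlib

open MeasureTheory Finset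

private lemma geom_half (n : ℕ) :
    ∑ r ∈ Finset.range n, (1 / 2 : ℝ) ^ (r + 2) = 1 / 2 - (1 / 2) ^ (n + 1) := by
  induction n with
  | zero => norm_num
  | succ n ih => rw [Finset.sum_range_succ, ih]; ring

private lemma cs_weighted (n : ℕ) (hn : 0 < n) (u w : ℕ → ℝ)
    (hw : ∀ i ∈ Finset.range n, 0 < w i) (hw1 : ∑ i ∈ Finset.range n, w i ≤ 1) :
    (∑ i ∈ Finset.range n, u i) ^ 2 ≤ ∑ i ∈ Finset.range n, u i ^ 2 / w i := by
  have hpos : 0 < ∑ i ∈ Finset.range n, w i :=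
    Finset.sum_pos hw (by simpa using hn.ne')
  calc (∑ i ∈ Finset.range n, u i) ^ 2
      ≤ (∑ i ∈ Finset.range n, u i) ^ 2 / ∑ i ∈ Finset.range n, w i := by
        rw [le_div_iff₀ hpos]
        nlinarith [sq_nonneg (∑ i ∈ Finset.range n, u i)]
    _ ≤ _ := Finset.sq_sum_div_le_sum_sq_div _ _ hw

private lemma chain2 (a : ℝ) (m : ℕ → ℝ) (ν : ℕ) :
    (a - m 0) ^ 2 ≤ 2 * (a - m ν) ^ 2 +
      ∑ r ∈ Finset.range ν, 2 ^ (r + 2) * (m r - m (r + 1)) ^ 2 := by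
  set u : ℕ → ℝ := fun r => if r = ν then a - m ν else m (r + 1) - m r with hu
  set w : ℕ → ℝ := fun r => if r = ν then 1 / 2 else (1 / 2) ^ (r + 2) with hw
  have hsum_u : ∑ i ∈ Finset.range (ν + 1), u i = a - m 0 := by
    rw [Finset.sum_range_succ,
      Finset.sum_congr rfl (fun i hi => show u i = m (i + 1) - m i by
        simp [hu, (Finset.mem_range.1 hi).ne]),
      Finset.sum_range_sub]
    simp [hu]
  have hwpos : ∀ i ∈ Finset.range (ν + 1), 0 < w i := fun i _ => by
    simp only [hw]
    split_ifs <;> positivity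
  have hwsum : ∑ i ∈ Finset.range (ν + 1), w i ≤ 1 := by
    rw [Finset.sum_range_succ,
      Finset.sum_congr rfl (fun i hi => show w i = (1/2:ℝ)^(i+2) by
        simp [hw, (Finset.mem_range.1 hi).ne]), geom_half]
    simp only [hw, if_pos rfl]
    have : (0:ℝ) < (1 / 2) ^ (ν + 1) := by positivity
    linarith
  have h := cs_weighted (ν + 1) (Nat.succ_pos ν) u w hwpos hwsum
  rw [hsum_u] at h
  refine h.trans (le_of_eq ?_)
  rw [Finset.sum_range_succ,
    Finset.sum_congr rfl (fun i hi => show u i ^ 2 / w i = 2^(i+2) * (m i - m (i+1))^2 by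
      have hne := (Finset.mem_range.1 hi).ne
      simp only [hu, hw, if_neg hne, one_div, inv_pow]
      rw [div_eq_mul_inv, inv_inv]
      ring)]
  simp only [hu, hw, if_pos rfl]
  ring

private lemma chain (a : ℝ) (m V : ℕ → ℝ) (hV : ∀ r, 0 ≤ V r) (ν : ℕ) (hν : 1 ≤ ν) :
    (a - m 0) ^ 2 + V 0 ≤ 2 * ((a - m ν) ^ 2 + V ν) +
      ∑ r ∈ Finset.range ν,
        2 ^ (r + 2) * ((m r - m (r + 1)) ^ 2 + V r + V (r + 1)) := by
  have h2 := chain2 a m ν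
  have hsplit : ∑ r ∈ Finset.range ν, (2:ℝ) ^ (r + 2) * ((m r - m (r + 1)) ^ 2 + V r + V (r + 1))
      = (∑ r ∈ Finset.range ν, (2:ℝ) ^ (r + 2) * (m r - m (r + 1)) ^ 2)
      + ∑ r ∈ Finset.range ν, (2:ℝ) ^ (r + 2) * (V r + V (r + 1)) := by
    rw [← Finset.sum_add_distrib]
    exact Finset.sum_congr rfl fun r _ => by ring
  have hV0 : V 0 ≤ ∑ r ∈ Finset.range ν, (2:ℝ) ^ (r + 2) * (V r + V (r + 1)) := by
    have h0 : (0:ℕ) ∈ Finset.range ν := Finset.mem_range.2 hν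
    have hs : (2:ℝ) ^ (0 + 2) * (V 0 + V (0 + 1)) ≤
        ∑ r ∈ Finset.range ν, (2:ℝ) ^ (r + 2) * (V r + V (r + 1)) :=
      Finset.single_le_sum (f := fun r => (2:ℝ) ^ (r + 2) * (V r + V (r + 1)))
        (fun i _ => by
          have h1 := hV i
          have h2 := hV (i + 1)
          positivity) h0
    norm_num at hs
    nlinarith [hV 0, hV 1]
  rw [hsplit]
  nlinarith [hV ν]

private lemma expand_int {X : Type*} [MeasurableSpace X] (μ : Measure X) [IsFiniteMeasure μ]
    (g : X → ℝ) (h1 : Integrable g μ) (h2 : Integrable (fun p => g p ^ 2) μ) (b : ℝ) :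
    ∫ p, (b - g p) ^ 2 ∂μ
      = (μ Set.univ).toReal * b ^ 2 - 2 * b * (∫ p, g p ∂μ) + ∫ p, g p ^ 2 ∂μ := by
  have h3 : ∀ p, (b - g p) ^ 2 = (b ^ 2 - 2 * b * g p) + g p ^ 2 := fun p => by ring
  simp_rw [h3]
  have hi0 : Integrable (fun _ : X => b ^ 2) μ := integrable_const _
  have hi1 : Integrable (fun p => 2 * b * g p) μ := h1.const_mul _
  have hi2 : Integrable (fun p => b ^ 2 - 2 * b * g p) μ := hi0.sub hi1
  rw [integral_add hi2 h2, integral_sub hi0 hi1, integral_const_mul, integral_const, measureReal_def,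
    smul_eq_mul]

private lemma main_ineq (a : ℝ) (c S Q : ℕ → ℝ) (hc : ∀ r, 0 < c r)
    (hvar : ∀ r, S r ^ 2 ≤ c r * Q r) (ν : ℕ) (hν : 1 ≤ ν) :
    c 0 * a ^ 2 - 2 * a * S 0 + Q 0 ≤
      2 * c 0 / c ν * (c ν * a ^ 2 - 2 * a * S ν + Q ν) +
      ∑ r ∈ Finset.range ν, 2 ^ (r + 2) * (c 0 / (c r * c (r + 1))) *
        (c (r + 1) * Q r - 2 * S (r + 1) * S r + c r * Q (r + 1)) := by
  have hV : ∀ r, 0 ≤ Q r / c r - (S r / c r) ^ 2 := fun r => by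
    have h := hvar r
    have hc' := hc r
    rw [div_pow, sub_nonneg, div_le_div_iff₀ (by positivity) hc']
    nlinarith
  have key : (a - S 0 / c 0) ^ 2 + (Q 0 / c 0 - (S 0 / c 0) ^ 2) ≤
      2 * ((a - S ν / c ν) ^ 2 + (Q ν / c ν - (S ν / c ν) ^ 2)) +
      ∑ r ∈ Finset.range ν, 2 ^ (r + 2) *
        ((S r / c r - S (r + 1) / c (r + 1)) ^ 2 + (Q r / c r - (S r / c r) ^ 2) +
          (Q (r + 1) / c (r + 1) - (S (r + 1) / c (r + 1)) ^ 2)) :=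
    chain a (fun r => S r / c r) (fun r => Q r / c r - (S r / c r) ^ 2) hV ν hν
  have eL : c 0 * a ^ 2 - 2 * a * S 0 + Q 0
      = c 0 * ((a - S 0 / c 0) ^ 2 + (Q 0 / c 0 - (S 0 / c 0) ^ 2)) := by
    have h0 := (hc 0).ne'
    field_simp
    ring
  have eR1 : 2 * c 0 / c ν * (c ν * a ^ 2 - 2 * a * S ν + Q ν)
      = c 0 * (2 * ((a - S ν / c ν) ^ 2 + (Q ν / c ν - (S ν / c ν) ^ 2))) := by
    have h0 := (hc ν).ne'
    field_simp
    ring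
  have eR2 : ∀ r ∈ Finset.range ν,
      2 ^ (r + 2) * (c 0 / (c r * c (r + 1))) *
        (c (r + 1) * Q r - 2 * S (r + 1) * S r + c r * Q (r + 1))
      = c 0 * (2 ^ (r + 2) *
        ((S r / c r - S (r + 1) / c (r + 1)) ^ 2 + (Q r / c r - (S r / c r) ^ 2) +
          (Q (r + 1) / c (r + 1) - (S (r + 1) / c (r + 1)) ^ 2))) := fun r _ => by
    have h1 := (hc r).ne'
    have h2 := (hc (r + 1)).ne'
    field_simp
    ring
  rw [eL, eR1, Finset.sum_congr rfl eR2, ← Finset.mul_sum, ← mul_add]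
  exact mul_le_mul_of_nonneg_left key (hc 0).le

theorem stmt_7 {X : Type*} [MeasurableSpace X] (μ : Measure X)
    (T : ℕ → Set X) (hTmeas : ∀ r, MeasurableSet (T r))
    (hTanti : ∀ r, T (r + 1) ⊆ T r)
    (hT0 : ∀ r, 0 < μ (T r)) (hT1 : ∀ r, μ (T r) < ⊤)
    (g : X → ℝ) (hg : MemLp g 2 μ) (x : X) (ν : ℕ) (hν : 1 ≤ ν) :
    ∫ p in T 0, (g x - g p) ^ 2 ∂μ ≤
      (2 * (μ (T 0)).toReal / (μ (T ν)).toReal) *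
        (∫ p in T ν, (g x - g p) ^ 2 ∂μ) +
      ∑ r ∈ Finset.range ν,
        2 ^ (r + 2) * ((μ (T 0)).toReal / ((μ (T r)).toReal * (μ (T (r + 1))).toReal)) *
          ∫ p in T r, ∫ q in T (r + 1), (g p - g q) ^ 2 ∂μ ∂μ := by
  have hfinm : ∀ r, IsFiniteMeasure (μ.restrict (T r)) := fun r =>
    ⟨by rw [Measure.restrict_apply_univ]; exact hT1 r⟩
  have h1 : ∀ r, Integrable g (μ.restrict (T r)) := fun r =>
    haveI := hfinm r
    (hg.restrict (T r)).integrable (by norm_num)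
  have h2 : ∀ r, Integrable (fun p => g p ^ 2) (μ.restrict (T r)) := fun r =>
    (hg.restrict (T r)).integrable_sq
  have hexp : ∀ (r : ℕ) (b : ℝ), ∫ p in T r, (b - g p) ^ 2 ∂μ
      = (μ (T r)).toReal * b ^ 2 - 2 * b * (∫ p in T r, g p ∂μ) + ∫ p in T r, g p ^ 2 ∂μ := by
    intro r b
    haveI := hfinm r
    have := expand_int (μ.restrict (T r)) g (h1 r) (h2 r) b
    rwa [Measure.restrict_apply_univ] at this
  have hvar : ∀ r, (∫ p in T r, g p ∂μ) ^ 2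
      ≤ (μ (T r)).toReal * ∫ p in T r, g p ^ 2 ∂μ := fun r => by
    have hcr : 0 < (μ (T r)).toReal := ENNReal.toReal_pos (hT0 r).ne' (hT1 r).ne
    have h0 : 0 ≤ ∫ p in T r, ((∫ p in T r, g p ∂μ) / (μ (T r)).toReal - g p) ^ 2 ∂μ :=
      integral_nonneg fun p => sq_nonneg _
    rw [hexp r _] at h0
    set s := ∫ p in T r, g p ∂μ
    set q := ∫ p in T r, g p ^ 2 ∂μ
    set cc := (μ (T r)).toReal
    have e : cc * (s / cc) ^ 2 - 2 * (s / cc) * s + q = q - s ^ 2 / cc := by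
      field_simp
      ring
    rw [e, sub_nonneg] at h0
    calc s ^ 2 = s ^ 2 / cc * cc := by field_simp
      _ ≤ q * cc := mul_le_mul_of_nonneg_right h0 hcr.le
      _ = cc * q := mul_comm _ _
  have hJ : ∀ r : ℕ, (∫ p in T r, ∫ q in T (r + 1), (g p - g q) ^ 2 ∂μ ∂μ)
      = (μ (T (r + 1))).toReal * (∫ p in T r, g p ^ 2 ∂μ)
        - 2 * (∫ p in T (r + 1), g p ∂μ) * (∫ p in T r, g p ∂μ)
        + (μ (T r)).toReal * ∫ p in T (r + 1), g p ^ 2 ∂μ := by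
    intro r
    have hin : ∀ p : X, ∫ q in T (r + 1), (g p - g q) ^ 2 ∂μ
        = (μ (T (r + 1))).toReal * g p ^ 2
          - 2 * (∫ q in T (r + 1), g q ∂μ) * g p + ∫ q in T (r + 1), g q ^ 2 ∂μ := fun p => by
      rw [hexp (r + 1) (g p)]
      ring
    simp_rw [hin]
    have hi1 : Integrable (fun p => (μ (T (r + 1))).toReal * g p ^ 2) (μ.restrict (T r)) :=
      (h2 r).const_mul _
    have hi2 : Integrable (fun p => 2 * (∫ q in T (r + 1), g q ∂μ) * g p) (μ.restrict (T r)) :=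
      (h1 r).const_mul _
    have hi3 : Integrable (fun p => (μ (T (r + 1))).toReal * g p ^ 2 -
        2 * (∫ q in T (r + 1), g q ∂μ) * g p) (μ.restrict (T r)) := hi1.sub hi2
    rw [integral_add hi3 (integrable_const _), integral_sub hi1 hi2,
      integral_const_mul, integral_const_mul, integral_const, measureReal_def, Measure.restrict_apply_univ,
      smul_eq_mul]
  rw [hexp 0 (g x), hexp ν (g x)]
  simp_rw [hJ]
  exact main_ineq (g x) (fun r => (μ (T r)).toReal) (fun r => ∫ p in T r, g p ∂μ)
    (fun r => ∫ p in T r, g p ^ 2 ∂μ)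
    (fun r => ENNReal.toReal_pos (hT0 r).ne' (hT1 r).ne) hvar ν hν
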